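/- Let K be a field and let B = Matrix.fromBlocks H J K' L be an (n+m)×(n+m) matrix over K with H of size n×n and L of size m×m invertible, and let D = H − J·L⁻¹·K' be the Schur complement of L in B. Then for every k and all finsets S, T ⊆ Fin n with S.card = T.card = k, one has det B[Ŝ ∪ M̂, T̂ ∪ M̂] = det L · det D[S,T]. -/
import Mathlib


open Matrix

/-- Determinant of the submatrix of `A` with rows indexed by the elements of `S` and
columns indexed by the elements of `T`, each listed in increasing order.
Defined to be `0` if the cardinalities of `S` and `T` differ
(the empty determinant is `1`). -/
noncomputable def fminor {ι R : Type*} [LinearOrder ι] [CommRing R]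
    (A : Matrix ι ι R) (S T : Finset ι) : R :=
  if h : S.card = T.card then
    (Matrix.of fun i j : Fin T.card =>
      A (S.orderEmbOfFin h i) (T.orderEmbOfFin rfl j)).det
  else 0

/-- `Fin n ⊕ Fin m` linearly ordered so that every element of the left summand precedes
every element of the right summand, each summand with its natural order. -/
abbrev SumLexIdx (n m : ℕ) := Lex (Fin n ⊕ Fin m)

/-- Inclusion of `Fin n` as the left block. -/
def inlL {n m : ℕ} (i : Fin n) : SumLexIdx n m := toLex (Sum.inl i)

/-- Inclusion of `Fin m` as the right block. -/
def inrL {n m : ℕ} (j : Fin m) : SumLexIdx n m := toLex (Sum.inr j)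

/-- View a matrix indexed by `Fin n ⊕ Fin m` as a matrix indexed by the linearly
ordered index type `SumLexIdx n m`. -/
def toLexMat {n m : ℕ} {R : Type*} (A : Matrix (Fin n ⊕ Fin m) (Fin n ⊕ Fin m) R) :
    Matrix (SumLexIdx n m) (SumLexIdx n m) R := fun i j => A (ofLex i) (ofLex j)

lemma inlL_injective {n m : ℕ} : Function.Injective (inlL (n := n) (m := m)) := by
  intro a b h
  exact Sum.inl_injective (toLex.injective h)

lemma inrL_injective {n m : ℕ} : Function.Injective (inrL (n := n) (m := m)) := by
  intro a b h
  exact Sum.inr_injective (toLex.injective h)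

lemma card_union_lex {n m : ℕ} (S : Finset (Fin n)) :
    (S.image inlL ∪ (Finset.univ : Finset (Fin m)).image inrL).card = S.card + m := by
  rw [Finset.card_union_of_disjoint, Finset.card_image_of_injective _ inlL_injective,
    Finset.card_image_of_injective _ inrL_injective, Finset.card_univ, Fintype.card_fin]
  refine Finset.disjoint_left.2 ?_
  rintro x hx hx'
  obtain ⟨a, _, rfl⟩ := Finset.mem_image.1 hx
  obtain ⟨b, _, hb⟩ := Finset.mem_image.1 hx'
  exact Sum.inl_ne_inr (toLex.injective hb.symm)

lemma orderEmb_union {n m k : ℕ} (S : Finset (Fin n)) (hSk : S.card = k)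
    (h : (S.image inlL ∪ (Finset.univ : Finset (Fin m)).image inrL).card = k + m)
    (i : Fin (k + m)) :
    (S.image inlL ∪ (Finset.univ : Finset (Fin m)).image inrL).orderEmbOfFin h i
      = Sum.elim (fun a => inlL (S.orderEmbOfFin hSk a)) inrL (finSumFinEquiv.symm i) := by
  have hmem : ∀ x : Fin (k + m),
      Sum.elim (fun a => inlL (S.orderEmbOfFin hSk a)) inrL (finSumFinEquiv.symm x)
        ∈ S.image inlL ∪ (Finset.univ : Finset (Fin m)).image inrL := by
    intro x
    rcases finSumFinEquiv.symm x with a | b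
    · exact Finset.mem_union_left _ (Finset.mem_image_of_mem _ (S.orderEmbOfFin_mem hSk a))
    · exact Finset.mem_union_right _ (Finset.mem_image_of_mem _ (Finset.mem_univ b))
  have hmono : StrictMono (fun x : Fin (k + m) =>
      Sum.elim (fun a => inlL (S.orderEmbOfFin hSk a)) inrL (finSumFinEquiv.symm x)) := by
    intro x y hxy
    obtain ⟨a, rfl⟩ := finSumFinEquiv.surjective x
    obtain ⟨b, rfl⟩ := finSumFinEquiv.surjective y
    simp only [Equiv.symm_apply_apply]
    rcases a with a | a <;> rcases b with b | b
    · have h2 : a < b := by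
        have := hxy
        simp only [finSumFinEquiv_apply_left, Fin.lt_def, Fin.coe_castAdd] at this
        exact this
      exact Sum.Lex.inl_lt_inl_iff.2 ((S.orderEmbOfFin hSk).strictMono h2)
    · exact Sum.Lex.inl_lt_inr _ _
    · exfalso
      have := hxy
      simp only [finSumFinEquiv_apply_left, finSumFinEquiv_apply_right, Fin.lt_def,
        Fin.coe_castAdd, Fin.coe_natAdd] at this
      omega
    · have h2 : a < b := by
        have := hxy
        simp only [finSumFinEquiv_apply_right, Fin.lt_def, Fin.coe_natAdd] at this
        omega
      exact Sum.Lex.inr_lt_inr_iff.2 h2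
  exact (congrFun (Finset.orderEmbOfFin_unique h hmem hmono) i).symm

/-- For `B = fromBlocks H J K' L` with `L` invertible and Schur complement
`D = H - J L⁻¹ K'`, the minor of `B` on rows `Ŝ ∪ M̂` and columns `T̂ ∪ M̂`
(where `M̂` is the full right block) equals `det L` times the minor of `D`
on rows `S` and columns `T`. -/
theorem minor_fromBlocks_full_right_eq_det_mul_minor_schur
    {K : Type*} [Field K] {n m : ℕ}
    (H : Matrix (Fin n) (Fin n) K) (J : Matrix (Fin n) (Fin m) K)
    (K' : Matrix (Fin m) (Fin n) K) (L : Matrix (Fin m) (Fin m) K)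
    (hL : IsUnit L.det)
    (k : ℕ) (S T : Finset (Fin n)) (hS : S.card = k) (hT : T.card = k) :
    fminor (toLexMat (Matrix.fromBlocks H J K' L))
        (S.image inlL ∪ (Finset.univ : Finset (Fin m)).image inrL)
        (T.image inlL ∪ (Finset.univ : Finset (Fin m)).image inrL)
      = L.det * fminor (H - J * L⁻¹ * K') S T := by
  classical
  have hST : S.card = T.card := hS.trans hT.symm
  set U := S.image inlL ∪ (Finset.univ : Finset (Fin m)).image inrL with hUdef
  set V := T.image (inlL (m := m)) ∪ (Finset.univ : Finset (Fin m)).image inrL with hVdef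
  have hUc : U.card = T.card + m := by rw [hUdef, card_union_lex, hST]
  have hVc : V.card = T.card + m := by rw [hVdef, card_union_lex]
  have hUV : U.card = V.card := hUc.trans hVc.symm
  rw [fminor, dif_pos hUV, fminor, dif_pos hST]
  set s := S.orderEmbOfFin hST with hsdef
  set t := T.orderEmbOfFin (rfl : T.card = T.card) with htdef
  -- reindex the big determinant to Fin (T.card + m)
  set ec : Fin (T.card + m) ≃ Fin V.card := finCongr hVc.symm with hec
  rw [← Matrix.det_submatrix_equiv_self ec]
  haveI : Invertible L := L.invertibleOfIsUnitDet hL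
  have hrow : ∀ i : Fin (T.card + m), U.orderEmbOfFin hUV (ec i)
      = Sum.elim (fun a => inlL (s a)) inrL (finSumFinEquiv.symm i) := by
    intro i
    have h1 : U.orderEmbOfFin hUV (ec i) = U.orderEmbOfFin hUc i :=
      Finset.orderEmbOfFin_eq_orderEmbOfFin_iff.2 rfl
    rw [h1, orderEmb_union S hST hUc i]
  have hcol : ∀ j : Fin (T.card + m), V.orderEmbOfFin rfl (ec j)
      = Sum.elim (fun a => inlL (t a)) inrL (finSumFinEquiv.symm j) := by
    intro j
    have h1 : V.orderEmbOfFin rfl (ec j) = V.orderEmbOfFin hVc j :=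
      Finset.orderEmbOfFin_eq_orderEmbOfFin_iff.2 rfl
    rw [h1, orderEmb_union T rfl hVc j]
  have hmat : ((Matrix.of fun i j : Fin V.card =>
        toLexMat (Matrix.fromBlocks H J K' L) (U.orderEmbOfFin hUV i)
          (V.orderEmbOfFin rfl j)).submatrix ec ec)
      = ((Matrix.fromBlocks (H.submatrix s t) (J.submatrix s id)
            (K'.submatrix id t) L).submatrix
          finSumFinEquiv.symm finSumFinEquiv.symm) := by
    ext i j
    simp only [Matrix.submatrix_apply, Matrix.of_apply, hrow i, hcol j]
    rcases finSumFinEquiv.symm i with a | a <;> rcases finSumFinEquiv.symm j with b | b <;> rfl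
  rw [hmat, Matrix.det_submatrix_equiv_self, Matrix.det_fromBlocks₂₂]
  rw [invOf_eq_nonsing_inv]
  have hfin : H.submatrix s t - J.submatrix (s ·) id * L⁻¹ * K'.submatrix id (t ·)
      = Matrix.of fun i j : Fin T.card => (H - J * L⁻¹ * K') (s i) (t j) := by
    ext i j
    simp [Matrix.mul_apply, Matrix.submatrix_apply, Matrix.sub_apply, Finset.mul_sum,
      Finset.sum_mul]
  rw [hfin]
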